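/- Let G be a countable group, let F = (F_n) be a Følner sequence in G, and let A be a subset of G with upper density d̄_F(A) > 0. Then there exists a left-translation-invariant finitely additive probability measure μ defined on all subsets of G such that μ(A) = d̄_F(A) and, for every r ≥ 1 and all elements g_1, …, g_r of G, one has d̄_F(g_1·A ∩ … ∩ g_r·A) ≥ μ(g_1·A ∩ … ∩ g_r·A). -/

import Mathlib

open Filter Pointwise
open scoped Classical Topology

/-- `F` is a (left) Følner sequence in the group `G`: a sequence of finite nonempty
subsets whose cardinalities tend to infinity and with `|F n ∩ g • F n| / |F n| → 1`
for every `g : G`. -/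
def IsFolner {G : Type*} [Group G] (F : ℕ → Finset G) : Prop :=
  (∀ n, (F n).Nonempty) ∧
    Tendsto (fun n => (F n).card) atTop atTop ∧
    ∀ g : G, Tendsto
      (fun n => (((F n) ∩ (F n).image (g * ·)).card : ℝ) / ((F n).card : ℝ))
      atTop (nhds 1)

/-- The upper density of `A ⊆ G` with respect to the sequence `F`:
`d̄_F(A) = limsup_n |A ∩ F n| / |F n|`. -/
noncomputable def upperDensity {G : Type*} [Group G] (F : ℕ → Finset G) (A : Set G) : ℝ :=
  limsup (fun n => (((F n).filter (· ∈ A)).card : ℝ) / ((F n).card : ℝ)) atTop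

private lemma filter_card_le_aux {G : Type*} [DecidableEq G] (S T : Finset G)
    (p : G → Prop) [DecidablePred p] :
    (S.filter p).card ≤ (T.filter p).card + (S \ T).card := by
  have h : S.filter p ⊆ (T.filter p) ∪ (S \ T) := by
    intro x hx
    simp only [Finset.mem_filter, Finset.mem_union, Finset.mem_sdiff] at *
    by_cases hT : x ∈ T
    · exact Or.inl ⟨hT, hx.2⟩
    · exact Or.inr ⟨hx.1, hT⟩
  exact (Finset.card_le_card h).trans (Finset.card_union_le _ _)

/-- Fact 1.6: for a subset `A` of positive upper density with respect to a Følner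
sequence `F` in a countable group `G`, there is a left-translation-invariant
finitely additive probability measure `μ` on all subsets of `G` with
`μ(A) = d̄_F(A)` and `d̄_F(g₁A ∩ … ∩ g_r A) ≥ μ(g₁A ∩ … ∩ g_r A)` for all
`g₁, …, g_r ∈ G`. -/
theorem folner_measure_exists {G : Type*} [Group G] [Countable G]
    (F : ℕ → Finset G) (hF : IsFolner F)
    (A : Set G) (hA : 0 < upperDensity F A) :
    ∃ μ : Set G → ℝ,
      (∀ B : Set G, 0 ≤ μ B) ∧
      μ Set.univ = 1 ∧
      (∀ B B' : Set G, Disjoint B B' → μ (B ∪ B') = μ B + μ B') ∧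
      (∀ (g : G) (B : Set G), μ (g • B) = μ B) ∧
      μ A = upperDensity F A ∧
      (∀ (r : ℕ), 1 ≤ r → ∀ g : Fin r → G,
        μ (⋂ i, g i • A) ≤ upperDensity F (⋂ i, g i • A)) := by
  classical
  obtain ⟨hne, -, hfol⟩ := hF
  set d : Set G → ℕ → ℝ :=
    fun B n => (((F n).filter (· ∈ B)).card : ℝ) / ((F n).card : ℝ) with hd
  have hUD : ∀ B : Set G, upperDensity F B = limsup (d B) atTop := fun B => rfl
  have hkpos : ∀ n, (0:ℝ) < ((F n).card : ℝ) := fun n => by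
    exact_mod_cast (hne n).card_pos
  have hd0 : ∀ (B : Set G) n, 0 ≤ d B n := fun B n =>
    div_nonneg (Nat.cast_nonneg _) (Nat.cast_nonneg _)
  have hd1 : ∀ (B : Set G) n, d B n ≤ 1 := fun B n => by
    rw [hd, div_le_one (hkpos n)]
    exact_mod_cast Finset.card_filter_le _ _
  have hbdd : ∀ B : Set G, IsBoundedUnder (· ≤ ·) atTop (d B) :=
    fun B => isBoundedUnder_of ⟨1, fun n => hd1 B n⟩
  have hcob : ∀ B : Set G, IsCoboundedUnder (· ≤ ·) atTop (d B) :=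
    fun B => isCoboundedUnder_le_of_le atTop (fun n => hd0 B n)
  set L := upperDensity F A with hL
  have hclus : MapClusterPt L atTop (d A) := by
    rw [(nhds_basis_Ioo_pos L).mapClusterPt_iff_frequently]
    intro ε hε
    have h1 : ∃ᶠ n in atTop, L - ε < d A n :=
      frequently_lt_of_lt_limsup (hcob A) (by rw [← hUD A, ← hL]; linarith)
    have h2 : ∀ᶠ n in atTop, d A n < L + ε :=
      eventually_lt_of_limsup_lt (by rw [← hUD A, ← hL]; linarith) (hbdd A)
    exact (h1.and_eventually h2).mono fun n hn => Set.mem_Ioo.mpr hn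
  obtain ⟨U, hUle, hUA⟩ := mapClusterPt_iff_ultrafilter.mp hclus
  have hlim : ∀ B : Set G, ∃ c, c ∈ Set.Icc (0:ℝ) 1 ∧ Tendsto (d B) U (𝓝 c) := by
    intro B
    have hmem : (U.map (d B) : Filter ℝ) ≤ 𝓟 (Set.Icc 0 1) := by
      rw [le_principal_iff]
      exact mem_map.mpr (univ_mem' fun n => ⟨hd0 B n, hd1 B n⟩)
    obtain ⟨c, hc, hle⟩ := isCompact_Icc.ultrafilter_le_nhds (U.map (d B)) hmem
    exact ⟨c, hc, hle⟩
  choose μ hμIcc hμ using hlim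
  have huniq : ∀ {B : Set G} {c : ℝ}, Tendsto (d B) U (𝓝 c) → μ B = c :=
    fun {B c} h => tendsto_nhds_unique (hμ B) h
  have hgen : ∀ B : Set G, μ B ≤ upperDensity F B := by
    intro B
    by_contra hcon
    push_neg at hcon
    set c : ℝ := (upperDensity F B + μ B) / 2 with hc
    have h1 : limsup (d B) atTop < c := by rw [← hUD B]; rw [hc]; linarith
    have hev : ∀ᶠ n in atTop, d B n < c := eventually_lt_of_limsup_lt h1 (hbdd B)
    have hev' : ∀ᶠ n in (U : Filter ℕ), d B n ≤ c := (hev.filter_mono hUle).mono fun n h => le_of_lt h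
    have : μ B ≤ c := le_of_tendsto (hμ B) hev'
    rw [hc] at this
    linarith
  refine ⟨μ, fun B => (hμIcc B).1, ?_, ?_, ?_, huniq hUA, fun r _ g => hgen _⟩
  · -- μ univ = 1
    apply huniq
    have heq : ∀ n, d Set.univ n = 1 := by
      intro n
      rw [hd]
      simp only [Set.mem_univ, Finset.filter_true]
      exact div_self (hkpos n).ne'
    exact tendsto_const_nhds.congr fun n => (heq n).symm
  · -- additivity
    intro B B' hdisj
    apply huniq
    have heq : ∀ n, d (B ∪ B') n = d B n + d B' n := by
      intro n
      have h2 : Disjoint ((F n).filter (· ∈ B)) ((F n).filter (· ∈ B')) := by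
        simp only [Finset.disjoint_left, Finset.mem_filter]
        exact fun {x} hx hx' => Set.disjoint_left.mp hdisj hx.2 hx'.2
      rw [hd]
      simp only [Set.mem_union, Finset.filter_or]
      rw [Finset.card_union_of_disjoint h2, Nat.cast_add, add_div]
    exact (((hμ B).add (hμ B')).congr fun n => (heq n).symm)
  · -- translation invariance
    intro g B
    apply huniq
    have key : Tendsto (fun n => d (g • B) n - d B n) atTop (𝓝 0) := by
      have hq := hfol g⁻¹
      have htend : Tendsto
          (fun n => 1 - (((F n) ∩ (F n).image (g⁻¹ * ·)).card : ℝ) / ((F n).card : ℝ))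
          atTop (𝓝 0) := by
        have h := Tendsto.sub
          (tendsto_const_nhds : Tendsto (fun _ : ℕ => (1:ℝ)) atTop (𝓝 1)) hq
        simpa using h
      apply squeeze_zero_norm _ htend
      intro n
      set S : Finset G := (F n).image (g⁻¹ * ·) with hS
      set k : ℝ := ((F n).card : ℝ) with hk
      set m : ℝ := (((F n) ∩ S).card : ℝ) with hm
      have hScard : (S.card : ℝ) = k := by
        rw [hS, Finset.card_image_of_injective _ (mul_right_injective g⁻¹)]
      have hc1 : ((F n).filter (· ∈ g • B)).card = (S.filter (· ∈ B)).card := by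
        rw [hS, Finset.filter_image, Finset.card_image_of_injective _ (mul_right_injective g⁻¹)]
        congr 1
        apply Finset.filter_congr
        intro x _
        rw [Set.mem_smul_set_iff_inv_smul_mem, smul_eq_mul]
      set c1 : ℝ := ((S.filter (· ∈ B)).card : ℝ) with hc1'
      set c2 : ℝ := (((F n).filter (· ∈ B)).card : ℝ) with hc2'
      have hsd1 : ((S \ F n).card : ℝ) = k - m := by
        have h := Finset.card_sdiff_add_card_inter S (F n)
        rw [Finset.inter_comm] at h
        have h2 : ((S \ F n).card : ℝ) + (((F n) ∩ S).card : ℝ) = (S.card : ℝ) := by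
          exact_mod_cast h
        rw [← hm, hScard] at h2
        linarith
      have hsd2 : ((F n \ S).card : ℝ) = k - m := by
        have h := Finset.card_sdiff_add_card_inter (F n) S
        have h2 : ((F n \ S).card : ℝ) + (((F n) ∩ S).card : ℝ) = (((F n).card : ℕ) : ℝ) := by
          exact_mod_cast h
        rw [← hm, ← hk] at h2
        linarith
      have hb1 : c1 ≤ c2 + (k - m) := by
        have h := filter_card_le_aux S (F n) (· ∈ B)
        have h2 : ((S.filter (· ∈ B)).card : ℝ) ≤
            (((F n).filter (· ∈ B)).card : ℝ) + ((S \ F n).card : ℝ) := by exact_mod_cast h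
        rw [← hc1', ← hc2', hsd1] at h2
        exact h2
      have hb2 : c2 ≤ c1 + (k - m) := by
        have h := filter_card_le_aux (F n) S (· ∈ B)
        have h2 : (((F n).filter (· ∈ B)).card : ℝ) ≤
            ((S.filter (· ∈ B)).card : ℝ) + ((F n \ S).card : ℝ) := by exact_mod_cast h
        rw [← hc1', ← hc2', hsd2] at h2
        exact h2
      have habs : |c1 - c2| ≤ k - m := abs_le.mpr ⟨by linarith, by linarith⟩
      have hdg : d (g • B) n = c1 / k := by
        rw [hd]; simp only
        rw [hc1]
      have hdB : d B n = c2 / k := rfl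
      rw [hdg, hdB, Real.norm_eq_abs, div_sub_div_same, abs_div, abs_of_pos (hkpos n)]
      have : (1 : ℝ) - m / k = (k - m) / k := by
        have hk0 : k ≠ 0 := (hkpos n).ne'
        rw [sub_div, div_self hk0]
      rw [this]
      gcongr
    have h2 := (key.mono_left hUle).add (hμ B)
    rw [zero_add] at h2
    exact h2.congr fun n => by ring
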